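/- Let G and H be digraphs and let C = (w_1, …, w_t) with w_i = (u_i, x_i) be a directed cycle in the lexicographic product G[H]. Then either the subdigraph of G induced on the set U = {u_1, …, u_t} contains a directed cycle, or U has exactly one element and (x_1, …, x_t) is a directed cycle in H. -/

import Mathlib

/-- A directed cycle in the digraph with arc relation `Adj`: a list of at least two
distinct vertices with an arc between consecutive vertices and an arc from the last
vertex back to the first. -/
def IsDicycle {V : Type*} (Adj : V → V → Prop) (l : List V) : Prop :=
  2 ≤ l.length ∧ l.Nodup ∧ l.Chain' Adj ∧
    ∀ h : l ≠ [], Adj (l.getLast h) (l.head h)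

/-- A set of vertices is acyclic if the induced subdigraph contains no directed cycle. -/
def AcyclicSet {V : Type*} (Adj : V → V → Prop) (S : Set V) : Prop :=
  ¬ ∃ l : List V, (∀ v ∈ l, v ∈ S) ∧ IsDicycle Adj l

/-- A coloring is acyclic if every color class is an acyclic set. -/
def IsAcyclicColoring {V C : Type*} (Adj : V → V → Prop) (f : V → C) : Prop :=
  ∀ c : C, AcyclicSet Adj (f ⁻¹' {c})

/-- The dichromatic number: the least `k` admitting an acyclic `k`-coloring. -/
noncomputable def dichromaticNumber {V : Type*} (Adj : V → V → Prop) : ℕ :=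
  sInf {k : ℕ | ∃ f : V → Fin k, IsAcyclicColoring Adj f}

/-- Cartesian product of digraphs. -/
def cartAdj {V W : Type*} (GA : V → V → Prop) (HA : W → W → Prop) :
    V × W → V × W → Prop :=
  fun p q => (p.1 = q.1 ∧ HA p.2 q.2) ∨ (GA p.1 q.1 ∧ p.2 = q.2)

/-- Direct product of digraphs. -/
def directAdj {V W : Type*} (GA : V → V → Prop) (HA : W → W → Prop) :
    V × W → V × W → Prop :=
  fun p q => GA p.1 q.1 ∧ HA p.2 q.2

/-- Strong product of digraphs. -/
def strongAdj {V W : Type*} (GA : V → V → Prop) (HA : W → W → Prop) :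
    V × W → V × W → Prop :=
  fun p q => (p.1 = q.1 ∧ HA p.2 q.2) ∨ (GA p.1 q.1 ∧ p.2 = q.2) ∨
    (GA p.1 q.1 ∧ HA p.2 q.2)

/-- Lexicographic product of digraphs. -/
def lexAdj {V W : Type*} (GA : V → V → Prop) (HA : W → W → Prop) :
    V × W → V × W → Prop :=
  fun p q => GA p.1 q.1 ∨ (p.1 = q.1 ∧ HA p.2 q.2)

/-- The dicycle on `n` vertices: arcs `i → i + 1` on `ZMod n`. -/
def dicycleAdj (n : ℕ) : ZMod n → ZMod n → Prop := fun i j => j = i + 1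

/-- The complete digraph on `k` vertices. -/
def completeAdj (k : ℕ) : Fin k → Fin k → Prop := fun i j => i ≠ j

private lemma exists_dup' {α : Type*} : ∀ (c : List α), ¬ c.Nodup →
    ∃ (a : List α) (v : α) (b d : List α), c = a ++ v :: (b ++ v :: d) := by
  intro c hc
  induction c with
  | nil => exact absurd List.nodup_nil hc
  | cons x t ih =>
    by_cases hx : x ∈ t
    · obtain ⟨b, d, rfl⟩ := List.append_of_mem hx
      exact ⟨[], x, b, d, rfl⟩
    · have ht : ¬ t.Nodup := fun h => hc (List.nodup_cons.mpr ⟨hx, h⟩)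
      obtain ⟨a, v, b, d, rfl⟩ := ih ht
      exact ⟨x :: a, v, b, d, rfl⟩

private lemma walkA {V : Type*} (GA : V → V → Prop) (hG : Irreflexive GA) :
    ∀ (n : ℕ) (c : List V) (hne : c ≠ []), c.length ≤ n → 2 ≤ c.length →
      c.Chain' GA → GA (c.getLast hne) (c.head hne) →
      ∃ lG : List V, (∀ v ∈ lG, v ∈ c) ∧ IsDicycle GA lG := by
  intro n
  induction n with
  | zero => intro c _ hlen h2 _ _; omega
  | succ n ih =>
    intro c hne hlen h2 hch harc
    by_cases hnd : c.Nodup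
    · exact ⟨c, fun v hv => hv, h2, hnd, hch, fun _ => harc⟩
    · obtain ⟨a, v, b, d, rfl⟩ := exists_dup' c hnd
      have hinf : (v :: (b ++ [v])) <:+: a ++ v :: (b ++ v :: d) :=
        ⟨a, d, by simp⟩
      have hch' : (v :: (b ++ [v])).Chain' GA := hch.infix hinf
      cases b with
      | nil =>
        simp [List.Chain', List.isChain_cons_cons] at hch'
        exact absurd hch' (hG v)
      | cons w b' =>
        have hch'' : ((v :: w :: b') ++ [v]).Chain' GA := by simpa using hch'
        rw [List.Chain', List.isChain_append] at hch''
        obtain ⟨hc1, _, hcross⟩ := hch''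
        have hne' : (v :: w :: b') ≠ [] := by simp
        have harc' : GA ((v :: w :: b').getLast hne') ((v :: w :: b').head hne') :=
          hcross _ (by rw [List.getLast?_eq_getLast hne']; rfl) v rfl
        have hlen' : (v :: w :: b').length ≤ n := by
          simp only [List.length_append, List.length_cons] at hlen ⊢
          omega
        obtain ⟨lG, hmem, hdc⟩ := ih (v :: w :: b') hne' hlen' (by simp) hc1 harc'
        exact ⟨lG, fun x hx => by have := hmem x hx; simp at this ⊢; tauto, hdc⟩

private lemma chain_strict {V : Type*} {GA : V → V → Prop} :
    ∀ (c : List V), c.Chain' (fun x y => GA x y ∨ x = y) →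
      (¬ ∃ (a : List V) (v : V) (d : List V), c = a ++ v :: v :: d) →
      c.Chain' GA := by
  intro c
  induction c with
  | nil => simp [List.Chain']
  | cons x t ih =>
    intro hch hno
    cases t with
    | nil => simp [List.Chain']
    | cons y t' =>
      rw [List.Chain', List.isChain_cons_cons] at hch ⊢
      have hxy : x ≠ y := by
        rintro rfl
        exact hno ⟨[], x, t', rfl⟩
      refine ⟨hch.1.resolve_right hxy, ih hch.2 ?_⟩
      rintro ⟨a, v, d, hd⟩
      exact hno ⟨x :: a, v, d, by rw [hd]; rfl⟩

private lemma walkB {V : Type*} (GA : V → V → Prop) (hG : Irreflexive GA) :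
    ∀ (n : ℕ) (c : List V) (hne : c ≠ []), c.length ≤ n →
      c.Chain' (fun x y => GA x y ∨ x = y) →
      (GA (c.getLast hne) (c.head hne) ∨ c.getLast hne = c.head hne) →
      (∃ x ∈ c, ∃ y ∈ c, x ≠ y) →
      ∃ lG : List V, (∀ v ∈ lG, v ∈ c) ∧ IsDicycle GA lG := by
  intro n
  induction n with
  | zero =>
    intro c hne hlen _ _ _
    exact absurd (List.length_pos_iff.mpr hne) (by omega)
  | succ n ih =>
    intro c hne hlen hch harc hdist
    have h2 : 2 ≤ c.length := by
      by_contra h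
      have h1 : c.length = 1 := by
        have := List.length_pos_iff.mpr hne; omega
      obtain ⟨z, rfl⟩ := List.length_eq_one_iff.mp h1
      obtain ⟨x, hx, y, hy, hxy⟩ := hdist
      simp at hx hy
      exact hxy (hx.trans hy.symm)
    by_cases hadj : ∃ (a : List V) (v : V) (d : List V), c = a ++ v :: v :: d
    · obtain ⟨a, v, d, rfl⟩ := hadj
      have hne' : a ++ v :: d ≠ [] := by simp
      rw [List.Chain', List.isChain_append] at hch
      obtain ⟨hca, hcv, hcross⟩ := hch
      rw [List.isChain_cons_cons] at hcv
      have hch' : (a ++ v :: d).Chain' (fun x y => GA x y ∨ x = y) := by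
        rw [List.Chain', List.isChain_append]
        exact ⟨hca, hcv.2, by simpa using hcross⟩
      have hhead : (a ++ v :: d).head hne' = (a ++ v :: v :: d).head hne := by
        cases a with
        | nil => rfl
        | cons x a' => simp
      have hlast : (a ++ v :: d).getLast hne' = (a ++ v :: v :: d).getLast hne := by
        have e1 := List.getLast?_eq_getLast (l := a ++ v :: d) hne'
        have e2 := List.getLast?_eq_getLast (l := a ++ v :: v :: d) hne
        rw [List.getLast?_append, List.getLast?_cons_cons] at e2
        rw [List.getLast?_append] at e1
        rw [e2] at e1
        exact (Option.some.inj e1).symm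
      have harc' : GA ((a ++ v :: d).getLast hne') ((a ++ v :: d).head hne') ∨
          (a ++ v :: d).getLast hne' = (a ++ v :: d).head hne' := by
        rw [hhead, hlast]; exact harc
      have hlen' : (a ++ v :: d).length ≤ n := by
        simp only [List.length_append, List.length_cons] at hlen ⊢; omega
      have hdist' : ∃ x ∈ a ++ v :: d, ∃ y ∈ a ++ v :: d, x ≠ y := by
        obtain ⟨x, hx, y, hy, hxy⟩ := hdist
        refine ⟨x, ?_, y, ?_, hxy⟩ <;> simp at hx hy ⊢ <;> tauto
      obtain ⟨lG, hmem, hdc⟩ := ih (a ++ v :: d) hne' hlen' hch' harc' hdist'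
      refine ⟨lG, fun x hx => ?_, hdc⟩
      have := hmem x hx; simp at this ⊢; tauto
    · have hchG : c.Chain' GA := chain_strict c hch hadj
      rcases harc with harc | heq
      · exact walkA GA hG c.length c hne le_rfl h2 hchG harc
      · obtain ⟨z, t, rfl⟩ := List.exists_cons_of_ne_nil hne
        cases t with
        | nil => simp at h2
        | cons w t2 =>
          have hne2 : w :: t2 ≠ [] := by simp
          have hlast2 : (w :: t2).getLast hne2 = z := by
            rw [List.getLast_cons hne2] at heq
            simpa using heq
          rw [List.Chain', List.isChain_cons_cons] at hchG
          have hzw : GA z w := hchG.1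
          cases t2 with
          | nil =>
            simp at hlast2
            rw [← hlast2] at hzw
            exact absurd hzw (hG w)
          | cons u t' =>
            have hne3 : (w :: u :: t') ≠ [] := by simp
            have harc2 : GA ((w :: u :: t').getLast hne3) ((w :: u :: t').head hne3) := by
              rw [show (w :: u :: t').getLast hne3 = z from hlast2]
              exact hzw
            obtain ⟨lG, hmem, hdc⟩ :=
              walkA GA hG (w :: u :: t').length (w :: u :: t') hne3 le_rfl (by simp)
                hchG.2 harc2
            exact ⟨lG, fun x hx => List.mem_cons_of_mem z (hmem x hx), hdc⟩

private lemma chain_snd' {V W : Type*} (GA : V → V → Prop) (HA : W → W → Prop)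
    (hG : Irreflexive GA) :
    ∀ (l : List (V × W)), (∀ p ∈ l, ∀ q ∈ l, p.1 = q.1) →
      l.Chain' (fun p q => GA p.1 q.1 ∨ (p.1 = q.1 ∧ HA p.2 q.2)) →
      l.Chain' (fun p q => HA p.2 q.2) := by
  intro l
  induction l with
  | nil => simp [List.Chain']
  | cons x t ih =>
    intro hall hch
    cases t with
    | nil => simp [List.Chain']
    | cons y t' =>
      rw [List.Chain', List.isChain_cons_cons] at hch ⊢
      refine ⟨?_, ih (fun p hp q hq => hall p (.tail _ hp) q (.tail _ hq)) hch.2⟩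
      rcases hch.1 with hga | h
      · have h1 := hall x (.head _) y (.tail _ (.head _))
        rw [h1] at hga
        exact absurd hga (hG _)
      · exact h.2

theorem stmt18 {V W : Type*} (GA : V → V → Prop) (HA : W → W → Prop)
    (hG : Irreflexive GA) (hH : Irreflexive HA)
    (l : List (V × W)) (hl : IsDicycle (lexAdj GA HA) l) :
    (∃ lG : List V, (∀ v ∈ lG, v ∈ l.map Prod.fst) ∧ IsDicycle GA lG) ∨
    ((∀ p ∈ l, ∀ q ∈ l, p.1 = q.1) ∧ IsDicycle HA (l.map Prod.snd)) := by
  obtain ⟨h2, hnd, hch, harc⟩ := hl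
  have hne : l ≠ [] := by rintro rfl; simp at h2
  by_cases hall : ∀ p ∈ l, ∀ q ∈ l, p.1 = q.1
  · right
    refine ⟨hall, ?_, ?_, ?_, ?_⟩
    · simpa using h2
    · exact hnd.map_on fun p hp q hq hpq => Prod.ext (hall p hp q hq) hpq
    · rw [List.Chain', List.isChain_map]
      exact chain_snd' GA HA hG l hall hch
    · intro h
      rw [List.getLast_map, List.head_map]
      have h1 := harc hne
      have h3 := hall (l.getLast hne) (List.getLast_mem hne) (l.head hne) (List.head_mem hne)
      rcases h1 with hga | hha
      · rw [h3] at hga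
        exact absurd hga (hG _)
      · exact hha.2
  · left
    push_neg at hall
    obtain ⟨p, hp, q, hq, hpq⟩ := hall
    have hnec : l.map Prod.fst ≠ [] := by simp [hne]
    have hchc : (l.map Prod.fst).Chain' (fun x y => GA x y ∨ x = y) := by
      rw [List.Chain', List.isChain_map]
      exact hch.imp fun a b hab => hab.imp id And.left
    have harcc : GA ((l.map Prod.fst).getLast hnec) ((l.map Prod.fst).head hnec) ∨
        (l.map Prod.fst).getLast hnec = (l.map Prod.fst).head hnec := by
      rw [List.getLast_map, List.head_map]
      exact (harc hne).imp id And.left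
    exact walkB GA hG (l.map Prod.fst).length (l.map Prod.fst) hnec le_rfl hchc harcc
      ⟨p.1, List.mem_map_of_mem hp, q.1, List.mem_map_of_mem hq, hpq⟩
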